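/- For a fixed color word u of length n over the alphabet {0,...,l-1} and a fixed subset S of [n-1] containing the descent set of u, there is exactly one vector composition I with l rows such that d(I) = S and c(I) = u. Here d(I) is the set of partial sums of column weights of I, and c(I) is the coloring word of I obtained by reading, for each column from left to right, row indices with multiplicity equal to the corresponding entry. -/

import Mathlib

/-- The weight of a column of a vector composition with `l` rows. -/
def colWeight {l : ℕ} (v : Fin l → ℕ) : ℕ := ∑ r, v r

/-- The set `d(I)` of proper partial sums of the column weights of a vector
composition `I`. -/
def dSet {l : ℕ} (I : List (Fin l → ℕ)) : Finset ℕ :=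
  (Finset.Ioo 0 I.length).image fun k => ((I.take k).map colWeight).sum

/-- The coloring word `c(I)` of a vector composition: reading the columns from
left to right and each column from top to bottom, record `I r k` copies of the
color `r` (colors recorded as natural numbers `< l`). -/
def colorWord {l : ℕ} (I : List (Fin l → ℕ)) : List ℕ :=
  I.flatMap fun v => (List.finRange l).flatMap fun (r : Fin l) => List.replicate (v r) (r : ℕ)

/-- The descent set of a word `w₁ … wₙ`: positions `i` (with `1 ≤ i ≤ n-1`)
such that `w_i > w_{i+1}`. -/
def desSet (u : List ℕ) : Finset ℕ :=
  (Finset.Ico 1 u.length).filter fun i => u.getD i 0 < u.getD (i - 1) 0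

/-- The coloring word of a single column. -/
def colWord1 {l : ℕ} (v : Fin l → ℕ) : List ℕ :=
  (List.finRange l).flatMap fun r => List.replicate (v r) (r : ℕ)

lemma colorWord_nil {l : ℕ} : colorWord ([] : List (Fin l → ℕ)) = [] := rfl

lemma colorWord_cons {l : ℕ} (v : Fin l → ℕ) (I : List (Fin l → ℕ)) :
    colorWord (v :: I) = colWord1 v ++ colorWord I := by
  simp [colorWord, colWord1]

lemma length_colWord1 {l : ℕ} (v : Fin l → ℕ) : (colWord1 v).length = colWeight v := by
  rw [colWord1, List.length_flatMap, ← Fin.sum_univ_def]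
  simp [colWeight]

lemma count_colWord1 {l : ℕ} (v : Fin l → ℕ) (r : Fin l) :
    (colWord1 v).count (r : ℕ) = v r := by
  rw [colWord1, List.count_flatMap, ← Fin.sum_univ_def]
  have h : ∀ r' : Fin l,
      (List.count (r : ℕ) ∘ fun r'' : Fin l => List.replicate (v r'') (r'' : ℕ)) r'
        = if r' = r then v r else 0 := by
    intro r'
    simp only [Function.comp_apply, List.count_replicate]
    by_cases h : r' = r
    · subst h; simp
    · have hne : ¬ ((r' : ℕ) == (r : ℕ)) = true := by
        simp only [beq_iff_eq]
        exact fun hh => h (Fin.ext hh)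
      simp [h, hne]
  rw [Finset.sum_congr rfl fun r' _ => h r']
  simp

lemma count_colWord1_of_ge {l : ℕ} (v : Fin l → ℕ) {x : ℕ} (hx : l ≤ x) :
    (colWord1 v).count x = 0 := by
  rw [colWord1, List.count_flatMap, ← Fin.sum_univ_def]
  apply Finset.sum_eq_zero
  intro r' _
  simp only [Function.comp_apply, List.count_replicate]
  have h : ¬ ((r' : ℕ) == x) = true := by
    simp only [beq_iff_eq]
    have := r'.isLt
    omega
  simp [h]

lemma sorted_colWord1 {l : ℕ} (v : Fin l → ℕ) : (colWord1 v).Pairwise (· ≤ ·) := by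
  rw [colWord1, List.pairwise_flatMap]
  constructor
  · intro r _
    induction (v r) with
    | zero => simp
    | succ m ih =>
      rw [List.replicate_succ]
      exact List.Pairwise.cons
        (fun y hy => le_of_eq (List.eq_of_mem_replicate hy).symm) ih
  · apply (List.pairwise_lt_finRange l).imp
    intro a b hab x hx y hy
    rw [List.eq_of_mem_replicate hx, List.eq_of_mem_replicate hy]
    exact le_of_lt hab

lemma mem_colWord1 {l : ℕ} {v : Fin l → ℕ} {x : ℕ} (hx : x ∈ colWord1 v) : x < l := by
  rw [colWord1, List.mem_flatMap] at hx
  obtain ⟨r, _, hr⟩ := hx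
  rw [List.eq_of_mem_replicate hr]
  exact r.isLt

lemma colWord1_count {l : ℕ} {w : List ℕ} (hsort : w.Pairwise (· ≤ ·))
    (hlt : ∀ x ∈ w, x < l) :
    colWord1 (fun r : Fin l => w.count (r : ℕ)) = w := by
  apply List.Perm.eq_of_pairwise' (sorted_colWord1 _) hsort
  rw [List.perm_iff_count]
  intro x
  by_cases hx : x < l
  · exact count_colWord1 (fun r : Fin l => w.count (r : ℕ)) ⟨x, hx⟩
  · rw [count_colWord1_of_ge _ (le_of_not_gt hx)]
    symm
    rw [List.count_eq_zero]
    exact fun hmem => hx (hlt x hmem)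

lemma colWeight_pos {l : ℕ} {v : Fin l → ℕ} (hv : v ≠ 0) : 0 < colWeight v := by
  rcases Nat.eq_zero_or_pos (colWeight v) with h | h
  · exfalso
    apply hv
    funext r
    exact Finset.sum_eq_zero_iff.1 h r (Finset.mem_univ r)
  · exact h

lemma colorWord_eq_nil {l : ℕ} {I : List (Fin l → ℕ)} (h0 : ∀ v ∈ I, v ≠ 0)
    (h : colorWord I = []) : I = [] := by
  cases I with
  | nil => rfl
  | cons w J =>
    exfalso
    rw [colorWord_cons, List.append_eq_nil_iff] at h
    have h1 : (colWord1 w).length = 0 := by rw [h.1]; rfl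
    rw [length_colWord1] at h1
    have := colWeight_pos (h0 w (List.mem_cons_self))
    omega

lemma dSet_nil {l : ℕ} : dSet ([] : List (Fin l → ℕ)) = ∅ := by
  ext x
  simp only [dSet, List.length_nil, Finset.mem_image, Finset.mem_Ioo,
    Finset.notMem_empty, iff_false]
  rintro ⟨k, ⟨h1, h2⟩, _⟩
  omega

lemma dSet_singleton {l : ℕ} (v : Fin l → ℕ) : dSet [v] = ∅ := by
  ext x
  simp only [dSet, List.length_cons, List.length_nil, Finset.mem_image,
    Finset.mem_Ioo, Finset.notMem_empty, iff_false]
  rintro ⟨k, ⟨h1, h2⟩, _⟩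
  omega

lemma dSet_cons {l : ℕ} (v : Fin l → ℕ) {I : List (Fin l → ℕ)} (hI : I ≠ []) :
    dSet (v :: I) = insert (colWeight v) ((dSet I).image fun x => colWeight v + x) := by
  have hlen : 0 < I.length := List.length_pos_iff.2 hI
  ext x
  simp only [dSet, Finset.mem_image, Finset.mem_insert, Finset.mem_Ioo, List.length_cons]
  constructor
  · rintro ⟨k, ⟨hk0, hk1⟩, rfl⟩
    cases k with
    | zero => omega
    | succ j =>
      cases j with
      | zero => left; simp
      | succ j' =>
        right
        refine ⟨_, ⟨j' + 1, ⟨by omega, by omega⟩, rfl⟩, ?_⟩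
        rw [List.take_succ_cons, List.map_cons, List.sum_cons]
  · rintro (rfl | ⟨_, ⟨j, ⟨hj0, hj1⟩, rfl⟩, rfl⟩)
    · exact ⟨1, ⟨by omega, by omega⟩, by simp⟩
    · exact ⟨j + 1, ⟨by omega, by omega⟩,
        by rw [List.take_succ_cons, List.map_cons, List.sum_cons]⟩

lemma dSet_pos {l : ℕ} {I : List (Fin l → ℕ)} (h : ∀ v ∈ I, v ≠ 0) :
    ∀ x ∈ dSet I, 0 < x := by
  intro x hx
  simp only [dSet, Finset.mem_image, Finset.mem_Ioo] at hx
  obtain ⟨k, ⟨hk0, hkl⟩, rfl⟩ := hx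
  cases I with
  | nil => simp at hkl
  | cons w I' =>
    cases k with
    | zero => omega
    | succ j =>
      rw [List.take_succ_cons, List.map_cons, List.sum_cons]
      have := colWeight_pos (h w (List.mem_cons_self))
      omega

/-- For a fixed color word `u` of length `n` over `{0, …, l-1}` and a fixed
subset `S ⊆ [n-1]` containing the descent set of `u`, there is exactly one
vector composition `I` with `l` rows such that `d(I) = S` and `c(I) = u`. -/
theorem existsUnique_vector_composition (l n : ℕ) (S : Finset ℕ) (u : List ℕ)
    (hu : u.length = n) (hcol : ∀ x ∈ u, x < l)
    (hS : S ⊆ Finset.Ico 1 n) (hdes : desSet u ⊆ S) :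
    ∃! I : List (Fin l → ℕ),
      (∀ v ∈ I, v ≠ 0) ∧ dSet I = S ∧ colorWord I = u := by
  induction n using Nat.strong_induction_on generalizing S u with
  | _ n IH =>
    rcases Nat.eq_zero_or_pos n with hn | hn
    · -- n = 0
      subst hn
      have hS0 : S = ∅ := by
        ext x
        simp only [Finset.notMem_empty, iff_false]
        intro hx
        have := hS hx
        rw [Finset.mem_Ico] at this
        omega
      have hu0 : u = [] := List.length_eq_zero_iff.1 hu
      subst hu0
      refine ⟨[], ⟨by simp, by rw [dSet_nil, hS0], rfl⟩, ?_⟩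
      rintro J ⟨hJ0, _, hJc⟩
      exact colorWord_eq_nil hJ0 hJc
    · -- n ≥ 1
      obtain ⟨s, hs1, hsn, hsub, hspec⟩ :
          ∃ s, 1 ≤ s ∧ s ≤ n ∧ (∀ t ∈ S, s ≤ t) ∧ (s ∈ S ∨ (S = ∅ ∧ s = n)) := by
        by_cases h : S.Nonempty
        · have hm := S.min'_mem h
          have h2 := hS hm
          rw [Finset.mem_Ico] at h2
          exact ⟨S.min' h, h2.1, le_of_lt h2.2, fun t ht => S.min'_le t ht, Or.inl hm⟩
        · rw [Finset.not_nonempty_iff_eq_empty] at h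
          exact ⟨n, hn, le_refl n, by simp [h], Or.inr ⟨h, rfl⟩⟩
      have hsltn : s ∈ S → s < n := fun h => (Finset.mem_Ico.1 (hS h)).2
      have hmono : ∀ i, i + 1 < s → u.getD i 0 ≤ u.getD (i + 1) 0 := by
        intro i h1
        by_contra hlt
        push_neg at hlt
        have hd : i + 1 ∈ desSet u := by
          simp only [desSet, Finset.mem_filter, Finset.mem_Ico, hu]
          exact ⟨⟨by omega, by omega⟩, by simpa using hlt⟩
        have := hsub _ (hdes hd)
        omega
      have htklen : (u.take s).length = s := by rw [List.length_take, hu]; omega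
      have hsort : (u.take s).Pairwise (· ≤ ·) := by
        rw [← List.isChain_iff_pairwise, List.isChain_iff_getElem]
        intro i hi
        rw [htklen] at hi
        have h1 : i + 1 < s := by omega
        have h2 := hmono i h1
        rw [List.getD_eq_getElem _ _ (by omega), List.getD_eq_getElem _ _ (by omega)] at h2
        simp only [List.get_eq_getElem, List.getElem_take]
        exact h2
      set v : Fin l → ℕ := fun r => (u.take s).count (r : ℕ) with hv_def
      have hv_word : colWord1 v = u.take s :=
        colWord1_count hsort fun x hx => hcol x (List.mem_of_mem_take hx)
      have hvw : colWeight v = s := by rw [← length_colWord1, hv_word, htklen]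
      have hv_ne : v ≠ 0 := by
        intro h
        have h0 : colWeight v = 0 := by rw [h]; simp [colWeight]
        omega
      set S' : Finset ℕ := (S.erase s).image (fun t => t - s) with hS'_def
      have hgd : ∀ j, j < n - s → (u.drop s).getD j 0 = u.getD (s + j) 0 := by
        intro j hj
        rw [List.getD_eq_getElem _ _ (by rw [List.length_drop, hu]; omega),
          List.getD_eq_getElem _ _ (by omega), List.getElem_drop]
      obtain ⟨I', ⟨hI'0, hI'd, hI'c⟩, hI'uniq⟩ :=
        IH (n - s) (by omega) S' (u.drop s)
          (by rw [List.length_drop, hu])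
          (fun x hx => hcol x (List.mem_of_mem_drop hx))
          (by
            intro t ht
            simp only [hS'_def, Finset.mem_image, Finset.mem_erase] at ht
            obtain ⟨t', ⟨ht'1, ht'2⟩, rfl⟩ := ht
            have h1 := hsub t' ht'2
            have h2 := (Finset.mem_Ico.1 (hS ht'2)).2
            rw [Finset.mem_Ico]
            omega)
          (by
            intro i hi
            simp only [desSet, Finset.mem_filter, Finset.mem_Ico, List.length_drop, hu] at hi
            obtain ⟨⟨hi1, hi2⟩, hilt⟩ := hi
            rw [hgd i hi2, hgd (i - 1) (by omega)] at hilt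
            have hd : s + i ∈ desSet u := by
              simp only [desSet, Finset.mem_filter, Finset.mem_Ico, hu]
              refine ⟨⟨by omega, by omega⟩, ?_⟩
              have he : s + i - 1 = s + (i - 1) := by omega
              rw [he]
              exact hilt
            have hmem := hdes hd
            simp only [hS'_def, Finset.mem_image, Finset.mem_erase]
            exact ⟨s + i, ⟨by omega, hmem⟩, by omega⟩)
      refine ⟨v :: I', ⟨?_, ?_, ?_⟩, ?_⟩
      · intro w hw
        rcases List.mem_cons.1 hw with rfl | hw'
        · exact hv_ne
        · exact hI'0 w hw'
      · -- dSet (v :: I') = S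
        rcases hspec with hsS | ⟨hSe, hse⟩
        · have hslt : s < n := hsltn hsS
          have hI'ne : I' ≠ [] := by
            intro h
            rw [h, colorWord_nil] at hI'c
            have hl0 : (u.drop s).length = 0 := by rw [← hI'c]; rfl
            rw [List.length_drop, hu] at hl0
            omega
          rw [dSet_cons v hI'ne, hvw, hI'd, hS'_def, Finset.image_image]
          have himg : (S.erase s).image ((fun x => s + x) ∘ fun t => t - s) = S.erase s := by
            ext x
            simp only [Finset.mem_image, Finset.mem_erase, Function.comp_apply]
            constructor
            · rintro ⟨t, ⟨ht1, ht2⟩, rfl⟩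
              have := hsub t ht2
              have he : s + (t - s) = t := by omega
              rw [he]
              exact ⟨ht1, ht2⟩
            · rintro ⟨hx1, hx2⟩
              exact ⟨x, ⟨hx1, hx2⟩, by have := hsub x hx2; omega⟩
          rw [himg, Finset.insert_erase hsS]
        · -- S = ∅, s = n
          have hI'nil : I' = [] := by
            apply colorWord_eq_nil hI'0
            rw [hI'c]
            exact List.drop_eq_nil_of_le (by omega)
          subst hI'nil
          rw [hSe, dSet_singleton]
      · rw [colorWord_cons, hv_word, hI'c, List.take_append_drop]
      · -- uniqueness
        rintro J ⟨hJ0, hJd, hJc⟩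
        have hJne : J ≠ [] := by
          intro h
          rw [h, colorWord_nil] at hJc
          rw [← hJc] at hu
          simp at hu
          omega
        obtain ⟨w, J', rfl⟩ := List.exists_cons_of_ne_nil hJne
        have hJ'0 : ∀ x ∈ J', x ≠ 0 := fun x hx => hJ0 x (List.mem_cons_of_mem _ hx)
        have hws : colWeight w = s := by
          by_cases hJ' : J' = []
          · subst hJ'
            rw [dSet_singleton] at hJd
            have hse : s = n := by
              rcases hspec with h | h
              · exfalso; rw [← hJd] at h; simp at h
              · exact h.2
            have hlen : (colorWord [w]).length = n := by rw [hJc, hu]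
            rw [colorWord_cons, colorWord_nil, List.append_nil, length_colWord1] at hlen
            omega
          · rw [dSet_cons w hJ'] at hJd
            have hpos : ∀ x ∈ dSet J', 0 < x := dSet_pos hJ'0
            have hwS : colWeight w ∈ S := by rw [← hJd]; exact Finset.mem_insert_self _ _
            have hsw : s ≤ colWeight w := hsub _ hwS
            have hsS : s ∈ S := by
              rcases hspec with h | ⟨h, _⟩
              · exact h
              · exfalso; rw [h] at hwS; simp at hwS
            rw [← hJd] at hsS
            rcases Finset.mem_insert.1 hsS with h | h
            · omega
            · exfalso
              rw [Finset.mem_image] at h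
              obtain ⟨x, hx, hxe⟩ := h
              have := hpos x hx
              omega
        have hwlen : (colWord1 w).length = s := by rw [length_colWord1, hws]
        rw [colorWord_cons] at hJc
        have hwtake : colWord1 w = u.take s := by
          rw [← hJc, List.take_left' hwlen]
        have hJ'drop : colorWord J' = u.drop s := by
          rw [← hJc, List.drop_left' hwlen]
        have hwv : w = v := by
          funext r
          show w r = (u.take s).count (r : ℕ)
          rw [← count_colWord1 w r, hwtake]
        have hJ'd : dSet J' = S' := by
          by_cases hJ' : J' = []
          · subst hJ'
            rw [dSet_singleton] at hJd
            rw [dSet_nil, hS'_def, ← hJd]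
            simp
          · rw [dSet_cons w hJ', hws] at hJd
            have hpos : ∀ x ∈ dSet J', 0 < x := dSet_pos hJ'0
            have hsnotmem : s ∉ (dSet J').image fun x => s + x := by
              rw [Finset.mem_image]
              rintro ⟨x, hx, hxe⟩
              have := hpos x hx
              omega
            have himg : ((dSet J').image fun x => s + x) = S.erase s := by
              rw [← hJd, Finset.erase_insert hsnotmem]
            rw [hS'_def, ← himg, Finset.image_image]
            have hid : ((fun t => t - s) ∘ fun x => s + x) = id := by
              funext x; simp
            rw [hid, Finset.image_id]
        have hJI : J' = I' := hI'uniq J' ⟨hJ'0, hJ'd, hJ'drop⟩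
        rw [hwv, hJI]
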